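/- Let T be an integral domain, ε₁, …, ε_n ∈ T^× primitive d₁, …, d_n-th roots of unity respectively with ε_j ≠ 1, and suppose d_j | d_l for j ≤ l, and all β_{jk} = 1. Then the center of the associated graded skew polynomial algebra with relations x̄_j x̄_k = ε_j x̄_k x̄_j (j<k), x̄_j ȳ_k = ȳ_k x̄_j (j<k), x̄_j ȳ_k = ε_k ȳ_k x̄_j (j>k), ȳ_j ȳ_k = ȳ_k ȳ_j, x̄_j ȳ_j = ε_j ȳ_j x̄_j, equals the polynomial subalgebra T[x̄_1^{d_1}, ȳ_1^{d_1}, …, x̄_n^{d_n}, ȳ_n^{d_n}]. -/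

import Mathlib

open FreeAlgebra

inductive GrRel (T : Type*) [CommRing T] {n : ℕ} (ε : Fin n → T) :
    FreeAlgebra T (Fin n ⊕ Fin n) → FreeAlgebra T (Fin n ⊕ Fin n) → Prop
  | xx {j k : Fin n} (h : j < k) :
      GrRel T ε (ι T (Sum.inl j) * ι T (Sum.inl k))
        (ε j • (ι T (Sum.inl k) * ι T (Sum.inl j)))
  | xy_lt {j k : Fin n} (h : j < k) :
      GrRel T ε (ι T (Sum.inl j) * ι T (Sum.inr k))
        (ι T (Sum.inr k) * ι T (Sum.inl j))
  | xy_gt {j k : Fin n} (h : k < j) :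
      GrRel T ε (ι T (Sum.inl j) * ι T (Sum.inr k))
        (ε k • (ι T (Sum.inr k) * ι T (Sum.inl j)))
  | yy {j k : Fin n} :
      GrRel T ε (ι T (Sum.inr j) * ι T (Sum.inr k))
        (ι T (Sum.inr k) * ι T (Sum.inr j))
  | xy_eq {j : Fin n} :
      GrRel T ε (ι T (Sum.inl j) * ι T (Sum.inr j))
        (ε j • (ι T (Sum.inr j) * ι T (Sum.inl j)))

noncomputable section Aux18

namespace Aux18

open Finset

variable {T : Type*} [CommRing T] {n : ℕ} (ε : Fin n → T)

/-- exponent monoid -/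
abbrev M (n : ℕ) := (Fin n → ℕ) × (Fin n → ℕ)

def Xb (j : Fin n) : RingQuot (GrRel T ε) :=
  RingQuot.mkAlgHom T (GrRel T ε) (ι T (Sum.inl j))

def Yb (j : Fin n) : RingQuot (GrRel T ε) :=
  RingQuot.mkAlgHom T (GrRel T ε) (ι T (Sum.inr j))

lemma rel_xx {j k : Fin n} (h : j < k) : Xb ε j * Xb ε k = ε j • (Xb ε k * Xb ε j) := by
  simpa only [Xb, Yb, map_mul, map_smul] using RingQuot.mkAlgHom_rel T (GrRel.xx (T := T) (ε := ε) h)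

lemma rel_xy_lt {j k : Fin n} (h : j < k) : Xb ε j * Yb ε k = Yb ε k * Xb ε j := by
  simpa only [Xb, Yb, map_mul, map_smul] using RingQuot.mkAlgHom_rel T (GrRel.xy_lt (T := T) (ε := ε) h)

lemma rel_xy_gt {j k : Fin n} (h : k < j) : Xb ε j * Yb ε k = ε k • (Yb ε k * Xb ε j) := by
  simpa only [Xb, Yb, map_mul, map_smul] using RingQuot.mkAlgHom_rel T (GrRel.xy_gt (T := T) (ε := ε) h)

lemma rel_yy {j k : Fin n} : Yb ε j * Yb ε k = Yb ε k * Yb ε j := by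
  simpa only [Xb, Yb, map_mul, map_smul] using RingQuot.mkAlgHom_rel T (GrRel.yy (T := T) (ε := ε) (j := j) (k := k))

lemma rel_xy_eq {j : Fin n} : Xb ε j * Yb ε j = ε j • (Yb ε j * Xb ε j) := by
  simpa only [Xb, Yb, map_mul, map_smul] using RingQuot.mkAlgHom_rel T (GrRel.xy_eq (T := T) (ε := ε) (j := j))

section generic
variable {R : Type*} [Ring R] [Algebra T R] {x y : R} {t : T}

lemma pow_left_comm (h : x * y = t • (y * x)) : ∀ m : ℕ, x ^ m * y = t ^ m • (y * x ^ m)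
  | 0 => by simp
  | (m + 1) => by
    rw [pow_succ, mul_assoc, h, mul_smul_comm, ← mul_assoc, pow_left_comm h m,
      smul_mul_assoc, smul_smul, mul_assoc, ← pow_succ, ← pow_succ']

lemma pow_right_comm (h : x * y = t • (y * x)) : ∀ m : ℕ, x * y ^ m = t ^ m • (y ^ m * x)
  | 0 => by simp
  | (m + 1) => by
    rw [pow_succ', ← mul_assoc, h, smul_mul_assoc, mul_assoc, pow_right_comm h m,
      mul_smul_comm, smul_smul, ← mul_assoc, ← pow_succ']

end generic

/-- basis index shifts -/
def dX (k : Fin n) : M n := (Pi.single k 1, 0)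
def dY (k : Fin n) : M n := (0, Pi.single k 1)

/-- the cocycle value `c(δx_k, m)` -/
def cx (k : Fin n) (m : M n) : T :=
  ε k ^ ((∑ l ∈ univ.filter fun l => k < l, m.1 l) + m.2 k) *
    ∏ i ∈ univ.filter fun i => i < k, ε i ^ m.2 i

lemma cx_add_dX {j k : Fin n} (m : M n) :
    cx ε j (m + dX k) = (if j < k then ε j else 1) * cx ε j m := by
  simp only [cx, dX, Prod.fst_add, Prod.snd_add, Pi.add_apply, Pi.zero_apply, add_zero,
    Pi.single_apply, sum_add_distrib, Finset.sum_ite_eq', mem_filter, mem_univ, true_and]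
  split_ifs with h
  · ring
  · ring

lemma cx_add_dY {j k : Fin n} (m : M n) :
    cx ε j (m + dY k) = (if k = j then ε j else if k < j then ε k else 1) * cx ε j m := by
  simp only [cx, dY, Prod.fst_add, Prod.snd_add, Pi.add_apply, Pi.zero_apply, add_zero,
    Pi.single_apply]
  rw [Finset.prod_congr rfl (fun i _ => pow_add (ε i) (m.2 i) _), Finset.prod_mul_distrib]
  have h1 : ∀ i ∈ univ.filter fun i => i < j, ε i ^ (if (i : Fin n) = k then 1 else 0)
      = if (i : Fin n) = k then ε i else 1 := by
    intro i _; split_ifs <;> simp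
  rw [Finset.prod_congr rfl h1, Finset.prod_ite_eq']
  simp only [mem_filter, mem_univ, true_and]
  by_cases hkj : k = j
  · subst hkj; simp [pow_add]; ring
  · rw [if_neg hkj, if_neg (fun h => hkj h.symm)]
    ring


def LX (k : Fin n) : (M n →₀ T) →ₗ[T] (M n →₀ T) :=
  Finsupp.lsum T fun m => cx ε k m • Finsupp.lsingle (m + dX k)

def LY (_ε : Fin n → T) (k : Fin n) : (M n →₀ T) →ₗ[T] (M n →₀ T) :=
  Finsupp.lsum T fun m => Finsupp.lsingle (m + dY k)

@[simp] lemma LX_single (k : Fin n) (m : M n) (t : T) :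
    LX ε k (Finsupp.single m t) = cx ε k m • Finsupp.single (m + dX k) t := by
  simp [LX]

@[simp] lemma LY_single (k : Fin n) (m : M n) (t : T) :
    LY ε k (Finsupp.single m t) = Finsupp.single (m + dY k) t := by
  simp [LY]

/-- the representation on the free module over exponents, at the free algebra level -/
def phi : FreeAlgebra T (Fin n ⊕ Fin n) →ₐ[T] Module.End T (M n →₀ T) :=
  FreeAlgebra.lift T (Sum.elim (LX ε) (LY ε))

lemma phi_rel {x y : FreeAlgebra T (Fin n ⊕ Fin n)} (h : GrRel T ε x y) :
    phi ε x = phi ε y := by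
  cases h with
  | @xx j k h =>
    simp only [phi, map_mul, map_smul, FreeAlgebra.lift_ι_apply, Sum.elim_inl]
    refine Finsupp.lhom_ext fun m t => ?_
    simp only [Module.End.mul_apply, LX_single, map_smul, LinearMap.smul_apply, smul_smul,
      cx_add_dX, if_pos h, if_neg (asymm h)]
    rw [show m + dX k + dX j = m + dX j + dX k by abel]
    ring_nf
  | @xy_lt j k h =>
    simp only [phi, map_mul, map_smul, FreeAlgebra.lift_ι_apply, Sum.elim_inl, Sum.elim_inr]
    refine Finsupp.lhom_ext fun m t => ?_
    simp only [Module.End.mul_apply, LX_single, LY_single, map_smul, LinearMap.smul_apply,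
      cx_add_dY, if_neg (ne_of_gt h), if_neg (asymm h), one_mul]
    rw [show m + dY k + dX j = m + dX j + dY k by abel]
  | @xy_gt j k h =>
    simp only [phi, map_mul, map_smul, FreeAlgebra.lift_ι_apply, Sum.elim_inl, Sum.elim_inr]
    refine Finsupp.lhom_ext fun m t => ?_
    simp only [Module.End.mul_apply, LX_single, LY_single, map_smul, LinearMap.smul_apply,
      cx_add_dY, if_neg (ne_of_lt h), if_pos h, smul_smul]
    rw [show m + dY k + dX j = m + dX j + dY k by abel]
  | @yy j k =>
    simp only [phi, map_mul, map_smul, FreeAlgebra.lift_ι_apply, Sum.elim_inr]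
    refine Finsupp.lhom_ext fun m t => ?_
    simp only [Module.End.mul_apply, LY_single]
    rw [show m + dY k + dY j = m + dY j + dY k by abel]
  | @xy_eq j =>
    simp only [phi, map_mul, map_smul, FreeAlgebra.lift_ι_apply, Sum.elim_inl, Sum.elim_inr]
    refine Finsupp.lhom_ext fun m t => ?_
    simp only [Module.End.mul_apply, LX_single, LY_single, map_smul, LinearMap.smul_apply,
      cx_add_dY, if_pos rfl, smul_smul, if_true, eq_self_iff_true]
    rw [show m + dY j + dX j = m + dX j + dY j by abel]

/-- the representation of the quantum affine space -/
def rho : RingQuot (GrRel T ε) →ₐ[T] Module.End T (M n →₀ T) :=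
  RingQuot.liftAlgHom T ⟨phi ε, fun {x y} h => phi_rel ε h⟩

@[simp] lemma rho_Xb (j : Fin n) : rho ε (Xb ε j) = LX ε j := by
  simp [rho, Xb, RingQuot.liftAlgHom_mkAlgHom_apply, phi]

@[simp] lemma rho_Yb (j : Fin n) : rho ε (Yb ε j) = LY ε j := by
  simp [rho, Yb, RingQuot.liftAlgHom_mkAlgHom_apply, phi]


/-! ### Normal monomials -/

def X' (m : ℕ) : RingQuot (GrRel T ε) := if h : m < n then Xb ε ⟨m, h⟩ else 1
def Y' (m : ℕ) : RingQuot (GrRel T ε) := if h : m < n then Yb ε ⟨m, h⟩ else 1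

def av {n : ℕ} (a : Fin n → ℕ) (m : ℕ) : ℕ := if h : m < n then a ⟨m, h⟩ else 0

def Dx (a : Fin n → ℕ) : ℕ → RingQuot (GrRel T ε)
  | 0 => 1
  | (m + 1) => X' ε m ^ av a m * Dx a m

def Dy (b : Fin n → ℕ) : ℕ → RingQuot (GrRel T ε)
  | 0 => 1
  | (m + 1) => Dy b m * Y' ε m ^ av b m

def Nm (q : M n) : RingQuot (GrRel T ε) := Dy ε q.2 n * Dx ε q.1 n

lemma Dx_congr {a a' : Fin n → ℕ} : ∀ m : ℕ, (∀ j : Fin n, (j : ℕ) < m → a j = a' j) →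
    Dx ε a m = Dx ε a' m
  | 0, _ => rfl
  | (m + 1), h => by
    rw [Dx, Dx, Dx_congr m fun j hj => h j (Nat.lt_succ_of_lt hj)]
    congr 1
    unfold av
    split
    · rw [h _ (by simpa using Nat.lt_succ_self m)]
    · rfl

lemma Dy_congr {b b' : Fin n → ℕ} : ∀ m : ℕ, (∀ j : Fin n, (j : ℕ) < m → b j = b' j) →
    Dy ε b m = Dy ε b' m
  | 0, _ => rfl
  | (m + 1), h => by
    rw [Dy, Dy, Dy_congr m fun j hj => h j (Nat.lt_succ_of_lt hj)]
    congr 2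
    unfold av
    split
    · rw [h _ (by simpa using Nat.lt_succ_self m)]
    · rfl

lemma Yb_comm_Y' (k : Fin n) (m : ℕ) : Commute (Yb ε k) (Y' ε m) := by
  unfold Y'
  split
  · exact rel_yy ε
  · exact Commute.one_right _

lemma Yb_comm_Dy (k : Fin n) (b : Fin n → ℕ) : ∀ m : ℕ, Commute (Yb ε k) (Dy ε b m)
  | 0 => Commute.one_right _
  | (m + 1) => Commute.mul_right (Yb_comm_Dy k b m) ((Yb_comm_Y' ε k m).pow_right _)

lemma Dy_absorb (k : Fin n) (b : Fin n → ℕ) :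
    ∀ m : ℕ, (k : ℕ) < m → Dy ε b m * Yb ε k = Dy ε (Function.update b k (b k + 1)) m := by
  intro m
  induction m with
  | zero => omega
  | succ m ih =>
    intro hm
    rcases Nat.lt_or_ge (k : ℕ) m with h | h
    · rw [Dy, mul_assoc, ← (Yb_comm_Y' ε k m).pow_right _, ← mul_assoc, ih h, Dy]
      congr 2
      unfold av
      split
      · exact (Function.update_of_ne (Fin.ne_of_val_ne (by simpa using h.ne')) _ _).symm
      · rfl
    · have hk : (k : ℕ) = m := by omega
      subst hk
      rw [Dy, Dy, Dy_congr ε (k : ℕ) (fun j hj => (Function.update_of_ne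
        (Fin.ne_of_val_ne (Nat.ne_of_lt hj)) _ _).symm)]
      have hX : Y' ε (k : ℕ) = Yb ε k := by
        unfold Y'; rw [dif_pos k.isLt]
      have hav : av b (k : ℕ) = b k := by
        unfold av; rw [dif_pos k.isLt]
      have hav' : av (Function.update b k (b k + 1)) (k : ℕ) = b k + 1 := by
        unfold av; rw [dif_pos k.isLt, Fin.eta, Function.update_self]
      rw [hX, hav, hav', mul_assoc, ← pow_succ]

lemma Xb_Yb_comm (k j : Fin n) :
    Xb ε k * Yb ε j = (if j ≤ k then ε j else 1) • (Yb ε j * Xb ε k) := by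
  rcases lt_trichotomy j k with h | h | h
  · rw [if_pos h.le, rel_xy_gt ε h]
  · subst h; rw [if_pos le_rfl, rel_xy_eq ε]
  · rw [if_neg (not_le.mpr h), rel_xy_lt ε h, one_smul]

lemma Xb_pass_Y'pow (k : Fin n) (m p : ℕ) :
    ∃ t : T, Xb ε k * Y' ε m ^ p = t • (Y' ε m ^ p * Xb ε k) := by
  unfold Y'
  split
  · exact ⟨_, pow_right_comm (Xb_Yb_comm ε k _) p⟩
  · exact ⟨1, by simp⟩

lemma Xb_pass_Dy (k : Fin n) (b : Fin n → ℕ) :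
    ∀ m : ℕ, ∃ t : T, Xb ε k * Dy ε b m = t • (Dy ε b m * Xb ε k)
  | 0 => ⟨1, by simp [Dy]⟩
  | (m + 1) => by
    obtain ⟨t, ht⟩ := Xb_pass_Dy k b m
    obtain ⟨s, hs⟩ := Xb_pass_Y'pow ε k m (av b m)
    refine ⟨t * s, ?_⟩
    rw [Dy, ← mul_assoc, ht, smul_mul_assoc, mul_assoc, hs, mul_smul_comm, smul_smul,
      ← mul_assoc]

lemma Xb_pass_X'pow (k : Fin n) (m : ℕ) (hm : (k : ℕ) < m) (p : ℕ) :
    ∃ t : T, Xb ε k * X' ε m ^ p = t • (X' ε m ^ p * Xb ε k) := by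
  unfold X'
  split
  · next hmn =>
    have h := rel_xx ε (show k < (⟨m, hmn⟩ : Fin n) from hm)
    exact ⟨_, pow_right_comm h p⟩
  · exact ⟨1, by simp⟩

lemma Xb_absorb_Dx (k : Fin n) (a : Fin n → ℕ) :
    ∀ m : ℕ, (k : ℕ) < m →
      ∃ t : T, Xb ε k * Dx ε a m = t • Dx ε (Function.update a k (a k + 1)) m := by
  intro m
  induction m with
  | zero => omega
  | succ m ih =>
    intro hm
    rcases Nat.lt_or_ge (k : ℕ) m with h | h
    · obtain ⟨t, ht⟩ := ih h
      obtain ⟨s, hs⟩ := Xb_pass_X'pow ε k m h (av a m)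
      refine ⟨s * t, ?_⟩
      rw [Dx, ← mul_assoc, hs, smul_mul_assoc, mul_assoc, ht, mul_smul_comm, smul_smul, Dx]
      congr 3
      unfold av
      split
      · exact (Function.update_of_ne (Fin.ne_of_val_ne (by simpa using h.ne')) _ _).symm
      · rfl
    · have hk : (k : ℕ) = m := by omega
      subst hk
      refine ⟨1, ?_⟩
      rw [one_smul, Dx, Dx, Dx_congr ε (k : ℕ) (fun j hj => (Function.update_of_ne
        (Fin.ne_of_val_ne (Nat.ne_of_lt hj)) _ _).symm)]
      have hX : X' ε (k : ℕ) = Xb ε k := by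
        unfold X'; rw [dif_pos k.isLt]
      have hav : av a (k : ℕ) = a k := by
        unfold av; rw [dif_pos k.isLt]
      have hav' : av (Function.update a k (a k + 1)) (k : ℕ) = a k + 1 := by
        unfold av; rw [dif_pos k.isLt, Fin.eta, Function.update_self]
      rw [hX, hav, hav', ← mul_assoc, ← pow_succ']

lemma update_eq_add (a : Fin n → ℕ) (k : Fin n) :
    Function.update a k (a k + 1) = a + Pi.single k 1 := by
  funext j
  by_cases h : j = k
  · subst h; simp
  · simp [Function.update_of_ne h, Pi.single_apply, h]

lemma Xb_mul_Nm (k : Fin n) (q : M n) :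
    ∃ t : T, Xb ε k * Nm ε q = t • Nm ε (q + dX k) := by
  obtain ⟨t, ht⟩ := Xb_pass_Dy ε k q.2 n
  obtain ⟨s, hs⟩ := Xb_absorb_Dx ε k q.1 n k.isLt
  refine ⟨t * s, ?_⟩
  have h2 : (q + dX k).2 = q.2 := by simp [dX]
  have h1 : (q + dX k).1 = Function.update q.1 k (q.1 k + 1) := by
    rw [update_eq_add]; rfl
  rw [Nm, ← mul_assoc, ht, smul_mul_assoc, mul_assoc, hs, mul_smul_comm, smul_smul, Nm,
    h1, h2]

lemma Yb_mul_Nm (k : Fin n) (q : M n) : Yb ε k * Nm ε q = Nm ε (q + dY k) := by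
  have h1 : (q + dY k).1 = q.1 := by simp [dY]
  have h2 : (q + dY k).2 = Function.update q.2 k (q.2 k + 1) := by
    rw [update_eq_add]; rfl
  rw [Nm, ← mul_assoc, (Yb_comm_Dy ε k q.2 n).eq, Dy_absorb ε k q.2 n k.isLt, Nm, h1, h2]

lemma Dx_zero : ∀ m : ℕ, Dx ε (0 : Fin n → ℕ) m = 1
  | 0 => rfl
  | (m + 1) => by
    rw [Dx, Dx_zero m]
    simp [av]

lemma Dy_zero : ∀ m : ℕ, Dy ε (0 : Fin n → ℕ) m = 1
  | 0 => rfl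
  | (m + 1) => by
    rw [Dy, Dy_zero m]
    simp [av]

lemma Nm_zero : Nm ε 0 = 1 := by
  rw [Nm]
  show Dy ε 0 n * Dx ε 0 n = 1
  rw [Dx_zero, Dy_zero, one_mul]

lemma adjoin_XY :
    Algebra.adjoin T (Set.range (Xb ε) ∪ Set.range (Yb ε)) = ⊤ := by
  have hs : Set.range (Xb ε) ∪ Set.range (Yb ε)
      = (RingQuot.mkAlgHom T (GrRel T ε)) '' Set.range (ι T) := by
    ext z
    simp only [Set.mem_union, Set.mem_range, Set.mem_image]
    constructor
    · rintro (⟨j, rfl⟩ | ⟨j, rfl⟩)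
      · exact ⟨ι T (Sum.inl j), ⟨_, rfl⟩, rfl⟩
      · exact ⟨ι T (Sum.inr j), ⟨_, rfl⟩, rfl⟩
    · rintro ⟨_, ⟨s, rfl⟩, rfl⟩
      cases s with
      | inl j => exact Or.inl ⟨j, rfl⟩
      | inr j => exact Or.inr ⟨j, rfl⟩
  rw [hs, ← AlgHom.map_adjoin, FreeAlgebra.adjoin_range_ι, Algebra.map_top]
  exact AlgHom.range_eq_top _ |>.mpr (RingQuot.mkAlgHom_surjective T _)

lemma mem_span_Nm (z : RingQuot (GrRel T ε)) :
    z ∈ Submodule.span T (Set.range (Nm ε)) := by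
  set W := Submodule.span T (Set.range (Nm ε)) with hW
  let S : Subalgebra T (RingQuot (GrRel T ε)) :=
    { carrier := {z | ∀ w ∈ W, z * w ∈ W}
      mul_mem' := fun {z1 z2} h1 h2 w hw => by
        rw [mul_assoc]; exact h1 _ (h2 _ hw)
      one_mem' := fun w hw => by rwa [one_mul]
      add_mem' := fun {z1 z2} h1 h2 w hw => by
        rw [add_mul]; exact W.add_mem (h1 _ hw) (h2 _ hw)
      zero_mem' := fun w hw => by rw [zero_mul]; exact W.zero_mem
      algebraMap_mem' := fun t w hw => by
        rw [← Algebra.smul_def]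
        exact W.smul_mem t hw }
  have hXS : ∀ k : Fin n, Xb ε k ∈ S := by
    intro k w hw
    refine Submodule.span_induction ?_ ?_ ?_ ?_ hw
    · rintro _ ⟨q, rfl⟩
      obtain ⟨t, ht⟩ := Xb_mul_Nm ε k q
      rw [ht]
      exact W.smul_mem _ (Submodule.subset_span ⟨_, rfl⟩)
    · rw [mul_zero]; exact W.zero_mem
    · intro u v _ _ hu hv; rw [mul_add]; exact W.add_mem hu hv
    · intro t u _ hu; rw [mul_smul_comm]; exact W.smul_mem _ hu
  have hYS : ∀ k : Fin n, Yb ε k ∈ S := by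
    intro k w hw
    refine Submodule.span_induction ?_ ?_ ?_ ?_ hw
    · rintro _ ⟨q, rfl⟩
      rw [Yb_mul_Nm]
      exact Submodule.subset_span ⟨_, rfl⟩
    · rw [mul_zero]; exact W.zero_mem
    · intro u v _ _ hu hv; rw [mul_add]; exact W.add_mem hu hv
    · intro t u _ hu; rw [mul_smul_comm]; exact W.smul_mem _ hu
  have hS : S = ⊤ := by
    rw [eq_top_iff, ← adjoin_XY ε]
    refine Algebra.adjoin_le ?_
    rintro _ (⟨k, rfl⟩ | ⟨k, rfl⟩)
    · exact hXS k
    · exact hYS k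
  have hzS : z ∈ S := by rw [hS]; trivial
  have := hzS (Nm ε 0) (Submodule.subset_span ⟨0, rfl⟩)
  rwa [Nm_zero, mul_one] at this

/-! ### The representation on normal monomials -/

lemma cx_congr {k : Fin n} {q p : M n} (h1 : ∀ l, k < l → q.1 l = p.1 l)
    (h2 : q.2 = p.2) : cx ε k q = cx ε k p := by
  unfold cx
  rw [h2, Finset.sum_congr rfl fun l hl => h1 l (by simpa using hl)]

lemma single_add_single {k : Fin n} {c e : ℕ} :
    ((Pi.single k c, 0) : M n) + (Pi.single k e, 0) = (Pi.single k (c + e), 0) := by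
  rw [Prod.mk_add_mk, add_zero, ← Pi.single_add]

lemma single_add_single' {k : Fin n} {c e : ℕ} :
    ((0, Pi.single k c) : M n) + (0, Pi.single k e) = (0, Pi.single k (c + e)) := by
  rw [Prod.mk_add_mk, add_zero, ← Pi.single_add]

set_option maxHeartbeats 1000000 in
lemma LX_pow (k : Fin n) (p : M n) (t : T) :
    ∀ (c : ℕ) (q : M n), (∀ l : Fin n, k < l → q.1 l = p.1 l) → q.2 = p.2 →
      (LX ε k ^ c) (Finsupp.single q t)
        = (cx ε k p ^ c) • Finsupp.single (q + (Pi.single k c, 0)) t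
  | 0, q, _, _ => by
    rw [pow_zero, pow_zero, Module.End.one_apply, one_smul]
    have : ((Pi.single k 0, 0) : M n) = 0 := by rw [Pi.single_zero]; rfl
    rw [this, add_zero]
  | (c + 1), q, h1, h2 => by
    rw [pow_succ', Module.End.mul_apply, LX_pow k p t c q h1 h2, map_smul, LX_single]
    have hc : cx ε k (q + (Pi.single k c, 0)) = cx ε k p := by
      refine cx_congr ε (q := q + (Pi.single k c, 0)) (p := p) (fun l hl => ?_) ?_
      · show q.1 l + (Pi.single k c : Fin n → ℕ) l = p.1 l
        rw [Pi.single_apply, if_neg (ne_of_gt hl), add_zero]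
        exact h1 l hl
      · show q.2 + 0 = p.2
        rw [add_zero]; exact h2
    have hidx : ((Pi.single k c, 0) : M n) + dX k = (Pi.single k (c + 1), 0) :=
      single_add_single
    rw [hc, smul_smul, ← pow_succ, add_assoc, hidx]

lemma LY_pow (k : Fin n) (t : T) :
    ∀ (c : ℕ) (q : M n), (LY ε k ^ c) (Finsupp.single q t)
      = Finsupp.single (q + (0, Pi.single k c)) t
  | 0, q => by
    rw [pow_zero, Module.End.one_apply]
    have : ((0, Pi.single k 0) : M n) = 0 := by rw [Pi.single_zero]; rfl
    rw [this, add_zero]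
  | (c + 1), q => by
    rw [pow_succ', Module.End.mul_apply, LY_pow k t c q, LY_single]
    have hidx : ((0, Pi.single k c) : M n) + dY k = (0, Pi.single k (c + 1)) :=
      single_add_single'
    rw [add_assoc, hidx]

/-- truncation of exponents -/
def trunc {n : ℕ} (m : ℕ) (a : Fin n → ℕ) : Fin n → ℕ := fun j => if (j : ℕ) < m then a j else 0

lemma trunc_zero' (a : Fin n → ℕ) : trunc 0 a = 0 := by funext j; simp [trunc]

lemma trunc_n (a : Fin n → ℕ) : trunc n a = a := by
  funext j
  simp [trunc, j.isLt]

lemma trunc_succ (a : Fin n → ℕ) (m : ℕ) (hmn : m < n) :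
    trunc m a + Pi.single (⟨m, hmn⟩ : Fin n) (a ⟨m, hmn⟩) = trunc (m + 1) a := by
  funext j
  show trunc m a j + (Pi.single (⟨m, hmn⟩ : Fin n) (a ⟨m, hmn⟩) : Fin n → ℕ) j = trunc (m + 1) a j
  by_cases hj : (j : ℕ) < m
  · have hne : j ≠ ⟨m, hmn⟩ := Fin.ne_of_val_ne (Nat.ne_of_lt hj)
    simp [trunc, hj, Nat.lt_succ_of_lt hj, Pi.single_apply, hne]
  · by_cases hj' : j = ⟨m, hmn⟩
    · subst hj'; simp [trunc, hj]
    · have hv : (j : ℕ) ≠ m := fun h => hj' (Fin.ext h)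
      have : ¬ (j : ℕ) < m + 1 := by omega
      simp [trunc, hj, this, Pi.single_apply, hj']

lemma trunc_succ_ge (a : Fin n → ℕ) (m : ℕ) (hmn : ¬ m < n) :
    trunc (m + 1) a = trunc m a := by
  funext j
  have := j.isLt
  simp only [trunc]
  rcases Nat.lt_or_ge (j : ℕ) m with h' | h'
  · rw [if_pos h', if_pos (by omega)]
  · rw [if_neg (by omega), if_neg (by omega)]

lemma rho_Dx (a : Fin n → ℕ) (t : T) :
    ∀ (m : ℕ) (p : M n), rho ε (Dx ε a m) (Finsupp.single p t)
      = (∏ j ∈ univ.filter fun j : Fin n => (j : ℕ) < m, cx ε j p ^ a j) •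
          Finsupp.single (p + (trunc m a, 0)) t
  | 0, p => by
    rw [Dx, map_one, Module.End.one_apply]
    have h0 : univ.filter (fun j : Fin n => (j : ℕ) < 0) = ∅ := by
      ext j; simp
    have h1 : ((trunc 0 a, 0) : M n) = 0 := by rw [trunc_zero']; rfl
    rw [h0, Finset.prod_empty, one_smul, h1, add_zero]
  | (m + 1), p => by
    rw [Dx, map_mul, Module.End.mul_apply, rho_Dx a t m p, map_smul]
    by_cases hmn : m < n
    · have hX : X' ε m = Xb ε ⟨m, hmn⟩ := by unfold X'; rw [dif_pos hmn]
      have hav : av a m = a ⟨m, hmn⟩ := by unfold av; rw [dif_pos hmn]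
      rw [hX, map_pow, rho_Xb, hav]
      rw [LX_pow ε ⟨m, hmn⟩ p t (a ⟨m, hmn⟩) (p + (trunc m a, 0))
        (fun l hl => by
          have hml : m < (l : ℕ) := hl
          show p.1 l + trunc m a l = p.1 l
          have h2 : trunc m a l = 0 := by
            simp only [trunc]
            rw [if_neg (by omega)]
          rw [h2, add_zero])
        (show p.2 + 0 = p.2 by rw [add_zero])]
      rw [smul_smul]
      have hfil : (univ.filter fun j : Fin n => (j : ℕ) < m + 1)
          = insert ⟨m, hmn⟩ (univ.filter fun j : Fin n => (j : ℕ) < m) := by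
        ext j
        simp only [mem_filter, mem_univ, true_and, mem_insert, Fin.ext_iff]
        omega
      have hnot : (⟨m, hmn⟩ : Fin n) ∉ univ.filter fun j : Fin n => (j : ℕ) < m := by
        simp
      have hidx : ((trunc m a, 0) : M n) + (Pi.single ⟨m, hmn⟩ (a ⟨m, hmn⟩), 0)
          = (trunc (m + 1) a, 0) := by
        rw [Prod.mk_add_mk, add_zero, trunc_succ]
      rw [hfil, Finset.prod_insert hnot, mul_comm, add_assoc, hidx]
    · have hX : X' ε m = 1 := by unfold X'; rw [dif_neg hmn]
      have hav : av a m = 0 := by unfold av; rw [dif_neg hmn]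
      rw [hX, hav, pow_zero, map_one, Module.End.one_apply]
      have hfil : (univ.filter fun j : Fin n => (j : ℕ) < m + 1)
          = univ.filter fun j : Fin n => (j : ℕ) < m := by
        ext j
        have := j.isLt
        simp only [mem_filter, mem_univ, true_and]
        omega
      rw [hfil, trunc_succ_ge a m hmn]

lemma rho_Dy (b : Fin n → ℕ) (t : T) :
    ∀ (m : ℕ) (p : M n), rho ε (Dy ε b m) (Finsupp.single p t)
      = Finsupp.single (p + (0, trunc m b)) t
  | 0, p => by
    rw [Dy, map_one, Module.End.one_apply]
    have h1 : ((0, trunc 0 b) : M n) = 0 := by rw [trunc_zero']; rfl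
    rw [h1, add_zero]
  | (m + 1), p => by
    rw [Dy, map_mul, Module.End.mul_apply]
    by_cases hmn : m < n
    · have hY : Y' ε m = Yb ε ⟨m, hmn⟩ := by unfold Y'; rw [dif_pos hmn]
      have hav : av b m = b ⟨m, hmn⟩ := by unfold av; rw [dif_pos hmn]
      rw [hY, hav, map_pow, rho_Yb, LY_pow, rho_Dy b t m _]
      have hidx : ((0, Pi.single ⟨m, hmn⟩ (b ⟨m, hmn⟩)) : M n) + (0, trunc m b)
          = (0, trunc (m + 1) b) := by
        rw [Prod.mk_add_mk, add_zero, add_comm (Pi.single _ _), trunc_succ]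
      rw [add_assoc, hidx]
    · have hY : Y' ε m = 1 := by unfold Y'; rw [dif_neg hmn]
      have hav : av b m = 0 := by unfold av; rw [dif_neg hmn]
      rw [hY, hav, pow_zero, map_one, Module.End.one_apply, rho_Dy b t m p,
        trunc_succ_ge b m hmn]

lemma rho_Nm (q : M n) (p : M n) (t : T) :
    rho ε (Nm ε q) (Finsupp.single p t)
      = (∏ j : Fin n, cx ε j p ^ q.1 j) • Finsupp.single (p + q) t := by
  rw [Nm, map_mul, Module.End.mul_apply, rho_Dx, map_smul, rho_Dy]
  have hfil : (univ.filter fun j : Fin n => (j : ℕ) < n) = univ := by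
    ext j; simp [j.isLt]
  have hidx : ((q.1, 0) : M n) + (0, q.2) = q := by
    rw [Prod.mk_add_mk, add_zero, zero_add]
  rw [hfil, trunc_n, trunc_n, add_assoc, hidx]

/-! ### The center -/

lemma cx_zero (j : Fin n) : cx ε j 0 = 1 := by
  simp [cx]

lemma cx_dX (j k : Fin n) : cx ε j (dX k) = if j < k then ε j else 1 := by
  have h := cx_add_dX ε (j := j) (k := k) 0
  rwa [zero_add, cx_zero, mul_one] at h

lemma cx_dY (j k : Fin n) :
    cx ε j (dY k) = if k = j then ε j else if k < j then ε k else 1 := by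
  have h := cx_add_dY ε (j := j) (k := k) 0
  rwa [zero_add, cx_zero, mul_one] at h

lemma key (z : RingQuot (GrRel T ε)) (f : M n →₀ T)
    (hf : (f.sum fun q c => c • Nm ε q) = z)
    (g : RingQuot (GrRel T ε)) (δ : M n) (cg : M n → T)
    (hg : ∀ (p : M n) (t : T), rho ε g (Finsupp.single p t) = cg p • Finsupp.single (p + δ) t)
    (hcg0 : cg 0 = 1)
    (hzg : z * g = g * z) (q0 : M n) (hq0 : q0 ∈ f.support) :
    f q0 * (∏ j : Fin n, cx ε j δ ^ q0.1 j) = f q0 * cg q0 := by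
  classical
  have hz : ∀ p : M n, rho ε z (Finsupp.single p (1 : T))
      = ∑ q ∈ f.support,
          (f q * ∏ j : Fin n, cx ε j p ^ q.1 j) • Finsupp.single (p + q) (1 : T) := by
    intro p
    conv_lhs => rw [← hf]
    rw [Finsupp.sum, map_sum, LinearMap.sum_apply]
    refine Finset.sum_congr rfl fun q _ => ?_
    rw [map_smul, LinearMap.smul_apply, rho_Nm, smul_smul]
  have h := congrArg (rho ε) hzg
  rw [map_mul, map_mul] at h
  have h2 := DFunLike.congr_fun h (Finsupp.single (0 : M n) (1 : T))
  rw [Module.End.mul_apply, Module.End.mul_apply, hg, hcg0, one_smul, zero_add, hz, hz 0,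
    map_sum] at h2
  have hRHS : ∀ q ∈ f.support,
      rho ε g ((f q * ∏ j : Fin n, cx ε j 0 ^ q.1 j) • Finsupp.single ((0 : M n) + q) (1 : T))
        = (f q * cg q) • Finsupp.single (δ + q) (1 : T) := by
    intro q _
    rw [map_smul, hg]
    have hC : (∏ j : Fin n, cx ε j 0 ^ q.1 j) = 1 :=
      Finset.prod_eq_one fun j _ => by rw [cx_zero, one_pow]
    rw [hC, mul_one, zero_add, smul_smul, add_comm q δ]
  rw [Finset.sum_congr rfl hRHS] at h2
  have h3 := DFunLike.congr_fun h2 (δ + q0)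
  rw [Finsupp.finset_sum_apply, Finsupp.finset_sum_apply] at h3
  have hL : ∀ (c : T) (q : M n), ((c • Finsupp.single (δ + q) (1 : T)) (δ + q0))
      = if q = q0 then c else 0 := by
    intro c q
    rw [Finsupp.smul_apply, Finsupp.single_apply]
    by_cases hq : q = q0
    · rw [if_pos hq, if_pos (by rw [hq]), smul_eq_mul, mul_one]
    · rw [if_neg hq, if_neg (fun hc => hq (add_left_cancel hc)), smul_eq_mul, mul_zero]
  rw [Finset.sum_congr rfl fun q _ => hL _ q, Finset.sum_congr rfl fun q _ => hL _ q,
    Finset.sum_ite_eq' f.support q0 _, Finset.sum_ite_eq' f.support q0 _, if_pos hq0,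
    if_pos hq0] at h3
  exact h3

variable (d : Fin n → ℕ)

lemma eps_one (hprim : ∀ j, IsPrimitiveRoot (ε j) (d j)) {j : Fin n} {c : ℕ}
    (h : d j ∣ c) : ε j ^ c = 1 := by
  obtain ⟨e, rfl⟩ := h
  rw [pow_mul, (hprim j).pow_eq_one, one_pow]

lemma support_dvd [IsDomain T]
    (hprim : ∀ j, IsPrimitiveRoot (ε j) (d j))
    (hdiv : ∀ j l : Fin n, j ≤ l → d j ∣ d l)
    (z : RingQuot (GrRel T ε)) (hz : z ∈ Subalgebra.center T (RingQuot (GrRel T ε)))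
    (f : M n →₀ T) (hf : (f.sum fun q c => c • Nm ε q) = z)
    (q0 : M n) (hq0 : q0 ∈ f.support) :
    (∀ j, d j ∣ q0.1 j) ∧ (∀ j, d j ∣ q0.2 j) := by
  have hff : f q0 ≠ 0 := Finsupp.mem_support_iff.mp hq0
  have hcen : ∀ b, b * z = z * b := Subalgebra.mem_center_iff.mp hz
  -- Y relations
  have hY : ∀ k : Fin n, ε k ^ (∑ j ∈ univ.filter fun j => k ≤ j, q0.1 j) = 1 := by
    intro k
    have hk := key ε z f hf (Yb ε k) (dY k) (fun _ => 1)
      (fun p t => by rw [rho_Yb, LY_single, one_smul]) rfl ((hcen (Yb ε k)).symm) q0 hq0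
    have h1 : (∏ j : Fin n, cx ε j (dY k) ^ q0.1 j) = 1 :=
      mul_left_cancel₀ hff (by rw [hk, mul_one])
    have h2 : ∀ j : Fin n, cx ε j (dY k) ^ q0.1 j = ε k ^ (if k ≤ j then q0.1 j else 0) := by
      intro j
      rw [cx_dY]
      rcases eq_or_ne k j with hkj | hkj
      · subst hkj; rw [if_pos rfl, if_pos le_rfl]
      · rw [if_neg hkj]
        rcases lt_or_ge k j with hlt | hle
        · rw [if_pos hlt, if_pos hlt.le]
        · have hc1 : ¬ k < j := not_lt_of_ge hle
          have hc2 : ¬ k ≤ j := fun hc => hkj (le_antisymm hc hle)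
          rw [if_neg hc1, if_neg hc2, pow_zero, one_pow]
    rw [Finset.prod_congr rfl fun j _ => h2 j, Finset.prod_pow_eq_pow_sum,
      ← Finset.sum_filter] at h1
    exact h1
  have hdvd_le : ∀ k : Fin n, d k ∣ ∑ j ∈ univ.filter fun j => k ≤ j, q0.1 j :=
    fun k => (hprim k).dvd_of_pow_eq_one _ (hY k)
  have hdvd_lt : ∀ k : Fin n, d k ∣ ∑ j ∈ univ.filter fun j => k < j, q0.1 j := by
    intro k
    by_cases hk : (k : ℕ) + 1 < n
    · have hfil : (univ.filter fun j : Fin n => k < j)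
          = univ.filter fun j : Fin n => (⟨(k : ℕ) + 1, hk⟩ : Fin n) ≤ j := by
        ext j
        simp only [mem_filter, mem_univ, true_and, Fin.lt_def, Fin.le_def]
        omega
      rw [hfil]
      exact dvd_trans (hdiv k ⟨(k : ℕ) + 1, hk⟩ (by rw [Fin.le_def]; exact Nat.le_succ _))
        (hdvd_le ⟨(k : ℕ) + 1, hk⟩)
    · have hfil : (univ.filter fun j : Fin n => k < j) = ∅ := by
        ext j
        have := j.isLt
        simp only [mem_filter, mem_univ, true_and, Fin.lt_def, Finset.notMem_empty,
          iff_false]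
        omega
      rw [hfil, Finset.sum_empty]
      exact dvd_zero _
  have dvd1 : ∀ k, d k ∣ q0.1 k := by
    intro k
    have hsplit : (univ.filter fun j : Fin n => k ≤ j)
        = insert k (univ.filter fun j : Fin n => k < j) := by
      ext j
      simp only [mem_filter, mem_univ, true_and, mem_insert, Fin.lt_def, Fin.le_def,
        Fin.ext_iff]
      omega
    have hnk : k ∉ univ.filter fun j : Fin n => k < j := by simp
    have h := hdvd_le k
    rw [hsplit, Finset.sum_insert hnk] at h
    exact (Nat.dvd_add_right (hdvd_lt k)).mp (by rwa [add_comm] at h)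
  refine ⟨dvd1, ?_⟩
  -- X relations
  have hX : ∀ k : Fin n,
      ε k ^ q0.2 k * ∏ i ∈ univ.filter fun i : Fin n => i < k, ε i ^ q0.2 i = 1 := by
    intro k
    have hk := key ε z f hf (Xb ε k) (dX k) (cx ε k)
      (fun p t => by rw [rho_Xb, LX_single]) (cx_zero ε k) ((hcen (Xb ε k)).symm) q0 hq0
    have h1 : (∏ j : Fin n, cx ε j (dX k) ^ q0.1 j) = cx ε k q0 :=
      mul_left_cancel₀ hff hk
    have h2 : ∀ j : Fin n, cx ε j (dX k) ^ q0.1 j = if j < k then ε j ^ q0.1 j else 1 := by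
      intro j
      rw [cx_dX]
      split_ifs
      · rfl
      · rw [one_pow]
    have h3 : (∏ j : Fin n, cx ε j (dX k) ^ q0.1 j) = 1 := by
      rw [Finset.prod_congr rfl fun j _ => h2 j, ← Finset.prod_filter]
      exact Finset.prod_eq_one fun j _ => eps_one ε d hprim (dvd1 j)
    rw [h3] at h1
    unfold cx at h1
    rw [pow_add, eps_one ε d hprim (hdvd_lt k), one_mul] at h1
    exact h1.symm
  intro k
  suffices h : ∀ m : ℕ, ∀ k : Fin n, (k : ℕ) < m → d k ∣ q0.2 k from h n k k.isLt
  intro m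
  induction m with
  | zero => intro k hk; omega
  | succ m ih =>
    intro k hk
    rcases Nat.lt_or_ge (k : ℕ) m with h' | h'
    · exact ih k h'
    · have hP : (∏ i ∈ univ.filter fun i : Fin n => i < k, ε i ^ q0.2 i) = 1 := by
        refine Finset.prod_eq_one fun i hi => ?_
        have hik : i < k := (Finset.mem_filter.mp hi).2
        exact eps_one ε d hprim (ih i (by omega))
      have h := hX k
      rw [hP, mul_one] at h
      exact (hprim k).dvd_of_pow_eq_one _ h

lemma Dx_mem_adjoin (a : Fin n → ℕ) (ha : ∀ j, d j ∣ a j) :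
    ∀ m : ℕ, Dx ε a m ∈ Algebra.adjoin T
      ((Set.range fun j => Xb ε j ^ d j) ∪ (Set.range fun j => Yb ε j ^ d j))
  | 0 => one_mem _
  | (m + 1) => by
    rw [Dx]
    refine mul_mem ?_ (Dx_mem_adjoin a ha m)
    by_cases hmn : m < n
    · have hX : X' ε m = Xb ε ⟨m, hmn⟩ := by unfold X'; rw [dif_pos hmn]
      have hav : av a m = a ⟨m, hmn⟩ := by unfold av; rw [dif_pos hmn]
      obtain ⟨c, hc⟩ := ha ⟨m, hmn⟩
      rw [hX, hav, hc, pow_mul]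
      refine pow_mem (Algebra.subset_adjoin ?_) c
      exact Set.mem_union_left _ ⟨⟨m, hmn⟩, rfl⟩
    · have hX : X' ε m = 1 := by unfold X'; rw [dif_neg hmn]
      rw [hX, one_pow]
      exact one_mem _

lemma Dy_mem_adjoin (b : Fin n → ℕ) (hb : ∀ j, d j ∣ b j) :
    ∀ m : ℕ, Dy ε b m ∈ Algebra.adjoin T
      ((Set.range fun j => Xb ε j ^ d j) ∪ (Set.range fun j => Yb ε j ^ d j))
  | 0 => one_mem _
  | (m + 1) => by
    rw [Dy]
    refine mul_mem (Dy_mem_adjoin b hb m) ?_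
    by_cases hmn : m < n
    · have hY : Y' ε m = Yb ε ⟨m, hmn⟩ := by unfold Y'; rw [dif_pos hmn]
      have hav : av b m = b ⟨m, hmn⟩ := by unfold av; rw [dif_pos hmn]
      obtain ⟨c, hc⟩ := hb ⟨m, hmn⟩
      rw [hY, hav, hc, pow_mul]
      refine pow_mem (Algebra.subset_adjoin ?_) c
      exact Set.mem_union_right _ ⟨⟨m, hmn⟩, rfl⟩
    · have hY : Y' ε m = 1 := by unfold Y'; rw [dif_neg hmn]
      rw [hY, one_pow]
      exact one_mem _

lemma Nm_mem_adjoin (q : M n) (h1 : ∀ j, d j ∣ q.1 j) (h2 : ∀ j, d j ∣ q.2 j) :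
    Nm ε q ∈ Algebra.adjoin T
      ((Set.range fun j => Xb ε j ^ d j) ∪ (Set.range fun j => Yb ε j ^ d j)) :=
  mul_mem (Dy_mem_adjoin ε d q.2 h2 n) (Dx_mem_adjoin ε d q.1 h1 n)

lemma central_of_commute (u : RingQuot (GrRel T ε))
    (hX : ∀ k, Commute (Xb ε k) u) (hY : ∀ k, Commute (Yb ε k) u) :
    u ∈ Subalgebra.center T (RingQuot (GrRel T ε)) := by
  rw [Subalgebra.mem_center_iff]
  intro b
  have hb : b ∈ (⊤ : Subalgebra T (RingQuot (GrRel T ε))) := trivial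
  rw [← adjoin_XY ε] at hb
  induction hb using Algebra.adjoin_induction with
  | mem x hx =>
    rcases hx with ⟨k, rfl⟩ | ⟨k, rfl⟩
    · exact hX k
    · exact hY k
  | algebraMap t => exact Algebra.commutes t u
  | add x y _ _ hx hy => rw [add_mul, mul_add, hx, hy]
  | mul x y _ _ hx hy => rw [mul_assoc, hy, ← mul_assoc, hx, mul_assoc]

lemma Xpow_central (hprim : ∀ j, IsPrimitiveRoot (ε j) (d j))
    (hdiv : ∀ j l : Fin n, j ≤ l → d j ∣ d l) (j : Fin n) :
    Xb ε j ^ d j ∈ Subalgebra.center T (RingQuot (GrRel T ε)) := by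
  refine central_of_commute ε _ (fun k => ?_) (fun k => ?_)
  · show Xb ε k * Xb ε j ^ d j = Xb ε j ^ d j * Xb ε k
    rcases lt_trichotomy k j with h | h | h
    · rw [pow_right_comm (rel_xx ε h) (d j), eps_one ε d hprim (hdiv k j h.le), one_smul]
    · subst h; exact ((Commute.refl _).pow_right _).eq
    · have hh := pow_left_comm (rel_xx ε h) (d j)
      rw [eps_one ε d hprim dvd_rfl, one_smul] at hh
      exact hh.symm
  · show Yb ε k * Xb ε j ^ d j = Xb ε j ^ d j * Yb ε k
    rcases lt_trichotomy k j with h | h | h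
    · have hh := pow_left_comm (rel_xy_gt ε h) (d j)
      rw [eps_one ε d hprim (hdiv k j h.le), one_smul] at hh
      exact hh.symm
    · subst h
      have hh := pow_left_comm (rel_xy_eq ε (j := k)) (d k)
      rw [eps_one ε d hprim dvd_rfl, one_smul] at hh
      exact hh.symm
    · exact (Commute.pow_right ((rel_xy_lt ε h).symm : Commute (Yb ε k) (Xb ε j)).symm.symm (d j)).eq

lemma Ypow_central (hprim : ∀ j, IsPrimitiveRoot (ε j) (d j))
    (hdiv : ∀ j l : Fin n, j ≤ l → d j ∣ d l) (j : Fin n) :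
    Yb ε j ^ d j ∈ Subalgebra.center T (RingQuot (GrRel T ε)) := by
  refine central_of_commute ε _ (fun k => ?_) (fun k => ?_)
  · show Xb ε k * Yb ε j ^ d j = Yb ε j ^ d j * Xb ε k
    rcases lt_trichotomy k j with h | h | h
    · exact (Commute.pow_right ((rel_xy_lt ε h) : Commute (Xb ε k) (Yb ε j)) (d j)).eq
    · subst h
      rw [pow_right_comm (rel_xy_eq ε (j := k)) (d k), eps_one ε d hprim dvd_rfl, one_smul]
    · rw [pow_right_comm (rel_xy_gt ε h) (d j), eps_one ε d hprim dvd_rfl, one_smul]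
  · show Yb ε k * Yb ε j ^ d j = Yb ε j ^ d j * Yb ε k
    exact (Commute.pow_right (rel_yy ε) (d j)).eq

end Aux18

end Aux18

/-- Let `T` be an integral domain, `ε_j ∈ T^×` a primitive `d_j`-th root of unity with
`ε_j ≠ 1`, and `d_j ∣ d_l` for `j ≤ l`. Then the center of the quantum affine space
with relations as in `GrRel` (all `β_{jk} = 1`) is the polynomial subalgebra
`T[x̄_1^{d_1}, ȳ_1^{d_1}, …, x̄_n^{d_n}, ȳ_n^{d_n}]`. -/
theorem stmt_18 {T : Type*} [CommRing T] [IsDomain T] {n : ℕ}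
    (ε : Fin n → T) (d : Fin n → ℕ)
    (hprim : ∀ j, IsPrimitiveRoot (ε j) (d j))
    (hne1 : ∀ j, ε j ≠ 1)
    (hdiv : ∀ j l : Fin n, j ≤ l → d j ∣ d l) :
    Subalgebra.center T (RingQuot (GrRel T ε)) =
      Algebra.adjoin T
        ((Set.range fun j : Fin n =>
            RingQuot.mkAlgHom T (GrRel T ε) (ι T (Sum.inl j)) ^ d j) ∪
         (Set.range fun j : Fin n =>
            RingQuot.mkAlgHom T (GrRel T ε) (ι T (Sum.inr j)) ^ d j)) := by
  have hset : ((Set.range fun j : Fin n =>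
      RingQuot.mkAlgHom T (GrRel T ε) (ι T (Sum.inl j)) ^ d j) ∪
      (Set.range fun j : Fin n =>
      RingQuot.mkAlgHom T (GrRel T ε) (ι T (Sum.inr j)) ^ d j))
      = ((Set.range fun j => Aux18.Xb ε j ^ d j) ∪
         (Set.range fun j => Aux18.Yb ε j ^ d j)) := rfl
  rw [hset]
  apply le_antisymm
  · intro z hz
    obtain ⟨f, hf⟩ := Finsupp.mem_span_range_iff_exists_finsupp.mp (Aux18.mem_span_Nm ε z)
    rw [← hf, Finsupp.sum]
    refine sum_mem fun q hq => ?_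
    obtain ⟨h1, h2⟩ := Aux18.support_dvd ε d hprim hdiv z hz f hf q hq
    exact Subalgebra.smul_mem _ (Aux18.Nm_mem_adjoin ε d q h1 h2) _
  · refine Algebra.adjoin_le ?_
    rintro u (⟨j, rfl⟩ | ⟨j, rfl⟩)
    · exact Aux18.Xpow_central ε d hprim hdiv j
    · exact Aux18.Ypow_central ε d hprim hdiv j
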